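/- Let g : [0,1) → ℝ be defined by g(y) = 1 − 8/((√((9−y)/(1−y)) + 2)² − 1). There exists a sequence θ : ℕ → ℝ with θ(n) ≥ 0 for every n, ∑_{n=0}^∞ θ(n) = 1, ∑_{n=0}^∞ n·θ(n) = 1, and such that for every y ∈ [0,1), ∑_{n=0}^∞ θ(n)·yⁿ = g(y). In other words, g is the probability generating function of a critical offspring distribution on ℕ. -/

import Mathlib

open Real MeasureTheory Set Filter Topology

section GPGFAuxiliary


lemma tendsto_arctan_mul {c : ℝ} (hc : 0 < c) :
    Tendsto (fun u : ℝ => arctan (u * c)) atTop (𝓝 (π / 2)) := by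
  have h1 : Tendsto (fun u : ℝ => u * c) atTop atTop := tendsto_id.atTop_mul_const hc
  exact (Real.tendsto_arctan_atTop.mono_right nhdsWithin_le_nhds).comp h1

lemma tendsto_arctan_div {c : ℝ} (hc : 0 < c) :
    Tendsto (fun u : ℝ => arctan (u / c)) atTop (𝓝 (π / 2)) := by
  simpa [div_eq_mul_inv] using tendsto_arctan_mul (c := c⁻¹) (by positivity)

lemma tendsto_u_div_quad {c d : ℝ} (hc : 0 < c) (hd : 0 < d) :
    Tendsto (fun u : ℝ => u / (d * (c + u ^ 2))) atTop (𝓝 0) := by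
  apply squeeze_zero' (g := fun u : ℝ => 1 / (d * u))
  · filter_upwards [eventually_gt_atTop (0:ℝ)] with u hu
    positivity
  · filter_upwards [eventually_gt_atTop (0:ℝ)] with u hu
    rw [div_le_div_iff₀ (by positivity) (by positivity)]
    nlinarith [sq_nonneg u, hc.le, hd.le, hu.le]
  · simpa [div_eq_mul_inv] using
      (tendsto_inv_atTop_zero.const_mul (d⁻¹)).congr (by intro x; ring)

lemma hasDerivAt_u_div_quad (c d : ℝ) (x : ℝ) (hc : 0 < c) (hd : d ≠ 0) :
    HasDerivAt (fun u : ℝ => u / (d * (c + u ^ 2)))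
      ((c - x ^ 2) / (d * (c + x ^ 2) ^ 2)) x := by
  have hden : HasDerivAt (fun u : ℝ => d * (c + u ^ 2)) (d * (2 * x)) x := by
    simpa using (((hasDerivAt_pow 2 x).const_add c).const_mul d)
  have h := (hasDerivAt_id' x).div hden (by positivity)
  refine h.congr_deriv ?_
  have e : c + x ^ 2 ≠ 0 := by positivity
  field_simp
  ring

/-- FTC evaluation for the mean integrand. -/
lemma E_mean : ∫ u in Ioi (0:ℝ), u ^ 2 / (64 * (1 + u ^ 2) * (9 + u ^ 2)) = π / 512 := by
  have hderiv : ∀ x ∈ Ici (0:ℝ), HasDerivAt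
      (fun u : ℝ => 3 / 512 * arctan (u / 3) - 1 / 512 * arctan u)
      (x ^ 2 / (64 * (1 + x ^ 2) * (9 + x ^ 2))) x := by
    intro x _
    have h1 : HasDerivAt (fun u : ℝ => arctan (u / 3)) (1 / (1 + (x / 3) ^ 2) * (1 / 3)) x := by
      exact (Real.hasDerivAt_arctan (x / 3)).comp x ((hasDerivAt_id x).div_const 3)
    have h2 := Real.hasDerivAt_arctan x
    have := ((h1.const_mul ((3:ℝ) / 512)).sub (h2.const_mul ((1:ℝ) / 512)))
    refine this.congr_deriv ?_
    have e1 : (1:ℝ) + (x / 3) ^ 2 ≠ 0 := by positivity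
    have e2 : (1:ℝ) + x ^ 2 ≠ 0 := by positivity
    have e3 : (9:ℝ) + x ^ 2 ≠ 0 := by positivity
    field_simp
    ring
  have hpos : ∀ x ∈ Ioi (0:ℝ), 0 ≤ x ^ 2 / (64 * (1 + x ^ 2) * (9 + x ^ 2)) := by
    intro x _; positivity
  have htend : Tendsto (fun u : ℝ => 3 / 512 * arctan (u / 3) - 1 / 512 * arctan u)
      atTop (𝓝 (π / 512)) := by
    have := ((tendsto_arctan_div (c := 3) (by norm_num)).const_mul ((3:ℝ)/512)).sub
      ((Real.tendsto_arctan_atTop.mono_right nhdsWithin_le_nhds).const_mul ((1:ℝ)/512))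
    convert this using 2
    ring
  have := integral_Ioi_of_hasDerivAt_of_nonneg' hderiv hpos htend
  rw [this]
  norm_num


/-- FTC evaluation for the total-mass integrand. -/
lemma E_sum : ∫ u in Ioi (0:ℝ), u ^ 2 / (8 * (1 + u ^ 2) ^ 2 * (9 + u ^ 2)) = π / 512 := by
  have hderiv : ∀ x ∈ Ici (0:ℝ), HasDerivAt
      (fun u : ℝ => 5 / 512 * arctan u - u / (128 * (1 + u ^ 2)) - 3 / 512 * arctan (u / 3))
      (x ^ 2 / (8 * (1 + x ^ 2) ^ 2 * (9 + x ^ 2))) x := by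
    intro x _
    have h1 := (Real.hasDerivAt_arctan x).const_mul ((5:ℝ) / 512)
    have h2 := hasDerivAt_u_div_quad 1 128 x one_pos (by norm_num)
    have h3 : HasDerivAt (fun u : ℝ => arctan (u / 3)) (1 / (1 + (x / 3) ^ 2) * (1 / 3)) x := by
      exact (Real.hasDerivAt_arctan (x / 3)).comp x ((hasDerivAt_id x).div_const 3)
    have := (h1.sub h2).sub (h3.const_mul ((3:ℝ) / 512))
    refine this.congr_deriv ?_
    have e1 : (1:ℝ) + (x / 3) ^ 2 ≠ 0 := by positivity
    have e2 : (1:ℝ) + x ^ 2 ≠ 0 := by positivity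
    have e3 : (9:ℝ) + x ^ 2 ≠ 0 := by positivity
    field_simp
    ring
  have hpos : ∀ x ∈ Ioi (0:ℝ), 0 ≤ x ^ 2 / (8 * (1 + x ^ 2) ^ 2 * (9 + x ^ 2)) := by
    intro x _; positivity
  have htend : Tendsto
      (fun u : ℝ => 5 / 512 * arctan u - u / (128 * (1 + u ^ 2)) - 3 / 512 * arctan (u / 3))
      atTop (𝓝 (π / 512)) := by
    have := (((Real.tendsto_arctan_atTop.mono_right nhdsWithin_le_nhds).const_mul
      ((5:ℝ)/512)).sub (tendsto_u_div_quad (c := 1) (d := 128) one_pos (by norm_num))).sub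
      ((tendsto_arctan_div (c := 3) (by norm_num)).const_mul ((3:ℝ)/512))
    convert this using 2
    ring
  have := integral_Ioi_of_hasDerivAt_of_nonneg' hderiv hpos htend
  rw [this]
  norm_num

/-- FTC evaluation for y = 0. -/
lemma E_zero : ∫ u in Ioi (0:ℝ), u ^ 2 / ((1 + u ^ 2) ^ 2 * (9 + u ^ 2) ^ 2) = π / 768 := by
  have hderiv : ∀ x ∈ Ici (0:ℝ), HasDerivAt
      (fun u : ℝ => 3 / 256 * arctan u - u / (128 * (1 + u ^ 2)) - 7 / 768 * arctan (u / 3)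
        - u / (128 * (9 + u ^ 2)))
      (x ^ 2 / ((1 + x ^ 2) ^ 2 * (9 + x ^ 2) ^ 2)) x := by
    intro x _
    have h1 := (Real.hasDerivAt_arctan x).const_mul ((3:ℝ) / 256)
    have h2 := hasDerivAt_u_div_quad 1 128 x one_pos (by norm_num)
    have h3 : HasDerivAt (fun u : ℝ => arctan (u / 3)) (1 / (1 + (x / 3) ^ 2) * (1 / 3)) x := by
      exact (Real.hasDerivAt_arctan (x / 3)).comp x ((hasDerivAt_id x).div_const 3)
    have h4 := hasDerivAt_u_div_quad 9 128 x (by norm_num) (by norm_num)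
    have := ((h1.sub h2).sub (h3.const_mul ((7:ℝ) / 768))).sub h4
    refine this.congr_deriv ?_
    have e1 : (1:ℝ) + (x / 3) ^ 2 ≠ 0 := by positivity
    have e2 : (1:ℝ) + x ^ 2 ≠ 0 := by positivity
    have e3 : (9:ℝ) + x ^ 2 ≠ 0 := by positivity
    field_simp
    ring
  have hpos : ∀ x ∈ Ioi (0:ℝ), 0 ≤ x ^ 2 / ((1 + x ^ 2) ^ 2 * (9 + x ^ 2) ^ 2) := by
    intro x _; positivity
  have htend : Tendsto
      (fun u : ℝ => 3 / 256 * arctan u - u / (128 * (1 + u ^ 2)) - 7 / 768 * arctan (u / 3)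
        - u / (128 * (9 + u ^ 2))) atTop (𝓝 (π / 768)) := by
    have := ((((Real.tendsto_arctan_atTop.mono_right nhdsWithin_le_nhds).const_mul
      ((3:ℝ)/256)).sub (tendsto_u_div_quad (c := 1) (d := 128) one_pos (by norm_num))).sub
      ((tendsto_arctan_div (c := 3) (by norm_num)).const_mul ((7:ℝ)/768))).sub
      (tendsto_u_div_quad (c := 9) (d := 128) (by norm_num) (by norm_num))
    convert this using 2
    ring
  have := integral_Ioi_of_hasDerivAt_of_nonneg' hderiv hpos htend
  rw [this]
  norm_num

lemma g_alt {y : ℝ} (hy0 : 0 < y) (hy1 : y < 1) :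
    1 - 8 / ((Real.sqrt ((9 - y) / (1 - y)) + 2) ^ 2 - 1)
      = (10 - y) / 2 - 2 - 3 / (2 * y) + (1 - y) * Real.sqrt ((9 - y) * (1 - y)) / (2 * y) := by
  have hb : (0:ℝ) < 1 - y := by linarith
  have ha : (0:ℝ) < 9 - y := by linarith
  set F := Real.sqrt ((9 - y) * (1 - y)) with hFdef
  have hF2 : F ^ 2 = (9 - y) * (1 - y) := Real.sq_sqrt (by positivity)
  have hFpos : 0 < F := Real.sqrt_pos.2 (by positivity)
  have hs : Real.sqrt ((9 - y) / (1 - y)) = F / (1 - y) := by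
    rw [show (9 - y) / (1 - y) = (9 - y) * (1 - y) / (1 - y) ^ 2 by field_simp,
      Real.sqrt_div (by positivity), Real.sqrt_sq hb.le]
  rw [hs]
  have h1 : (F / (1 - y) + 2) ^ 2 - 1 = (12 - 4 * y + 4 * F) / (1 - y) := by
    field_simp
    linear_combination hF2
  rw [h1]
  have h2 : (12:ℝ) - 4 * y + 4 * F > 0 := by nlinarith
  have h2' : (12:ℝ) - y * 4 + 4 * F ≠ 0 := by linarith
  rw [div_div_eq_mul_div]
  field_simp
  linear_combination (4 * (y - 1)) * hF2



lemma E_pos {y : ℝ} (hy0 : 0 < y) (hy1 : y < 1) :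
    ∫ u in Ioi (0:ℝ), u ^ 2 / ((1 + u ^ 2) ^ 2 * (9 + u ^ 2) * ((9 - y) + (1 - y) * u ^ 2))
      = π / 512 * (1 - 8 / ((Real.sqrt ((9 - y) / (1 - y)) + 2) ^ 2 - 1)) := by
  have ha : (0:ℝ) < 9 - y := by linarith
  have hb : (0:ℝ) < 1 - y := by linarith
  set sa := Real.sqrt (9 - y) with hsadef
  set sb := Real.sqrt (1 - y) with hsbdef
  have hsa2 : sa ^ 2 = 9 - y := Real.sq_sqrt ha.le
  have hsb2 : sb ^ 2 = 1 - y := Real.sq_sqrt hb.le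
  have hsa0 : 0 < sa := Real.sqrt_pos.2 ha
  have hsb0 : 0 < sb := Real.sqrt_pos.2 hb
  set k := sb / sa with hkdef
  have hk0 : 0 < k := by positivity
  have hak : (9 - y) * k ^ 2 = 1 - y := by
    rw [hkdef, div_pow, hsa2, hsb2]
    field_simp
  set Φ : ℝ → ℝ := fun u => (10 - y) / 512 * arctan u
      - 1 / 64 * (u / (2 * (1 + u ^ 2)) + arctan u / 2)
      - 3 / (512 * y) * arctan (u / 3)
      + (1 - y) ^ 2 / (512 * y * k) * arctan (u * k) with hΦ
  have hderiv : ∀ x ∈ Ici (0:ℝ), HasDerivAt Φ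
      (x ^ 2 / ((1 + x ^ 2) ^ 2 * (9 + x ^ 2) * ((9 - y) + (1 - y) * x ^ 2))) x := by
    intro x _
    have hdq : (0:ℝ) < (9 - y) + (1 - y) * x ^ 2 := by nlinarith [sq_nonneg x]
    have h1 := (Real.hasDerivAt_arctan x).const_mul ((10 - y) / 512)
    have h2 := ((hasDerivAt_u_div_quad 1 2 x one_pos two_ne_zero).add
      ((Real.hasDerivAt_arctan x).div_const 2)).const_mul ((1:ℝ) / 64)
    have h3 : HasDerivAt (fun u : ℝ => arctan (u / 3)) (1 / (1 + (x / 3) ^ 2) * (1 / 3)) x := by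
      exact (Real.hasDerivAt_arctan (x / 3)).comp x ((hasDerivAt_id x).div_const 3)
    have h4 : HasDerivAt (fun u : ℝ => (1 - y) ^ 2 / (512 * y * k) * arctan (u * k))
        ((9 - y) * (1 - y) ^ 2 / (512 * y) / ((9 - y) + (1 - y) * x ^ 2)) x := by
      have harc : HasDerivAt (fun u : ℝ => arctan (u * k)) (1 / (1 + (x * k) ^ 2) * k) x := by
        have h := (Real.hasDerivAt_arctan (x * k)).comp x ((hasDerivAt_id x).mul_const k)
        exact h.congr_deriv (by simp)
      have := harc.const_mul ((1 - y) ^ 2 / (512 * y * k))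
      refine this.congr_deriv ?_
      have hden : (9 - y) + (1 - y) * x ^ 2 = (9 - y) * (1 + (x * k) ^ 2) := by
        linear_combination (-x^2) * hak
      rw [hden]
      have e1 : (1:ℝ) + (x * k) ^ 2 ≠ 0 := by positivity
      field_simp
    have := ((h1.sub h2).sub (h3.const_mul (3 / (512 * y)))).add h4
    refine this.congr_deriv ?_
    have e1 : (1:ℝ) + (x / 3) ^ 2 ≠ 0 := by positivity
    have e2 : (1:ℝ) + x ^ 2 ≠ 0 := by positivity
    have e3 : (9:ℝ) + x ^ 2 ≠ 0 := by positivity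
    field_simp
    ring
  have hpos : ∀ x ∈ Ioi (0:ℝ),
      0 ≤ x ^ 2 / ((1 + x ^ 2) ^ 2 * (9 + x ^ 2) * ((9 - y) + (1 - y) * x ^ 2)) := by
    intro x _
    have hdq : (0:ℝ) < (9 - y) + (1 - y) * x ^ 2 := by nlinarith [sq_nonneg x]
    positivity
  have htend : Tendsto Φ atTop (𝓝 (((10 - y) / 512 - 1 / 128 - 3 / (512 * y)
      + (1 - y) ^ 2 / (512 * y * k)) * (π / 2))) := by
    have t1 := (Real.tendsto_arctan_atTop.mono_right nhdsWithin_le_nhds).const_mul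
      ((10 - y) / 512)
    have t2 := ((tendsto_u_div_quad (c := 1) (d := 2) one_pos two_pos).add
      ((Real.tendsto_arctan_atTop.mono_right nhdsWithin_le_nhds).div_const 2)).const_mul
      ((1:ℝ) / 64)
    have t3 := (tendsto_arctan_div (c := 3) (by norm_num)).const_mul (3 / (512 * y))
    have t4 := (tendsto_arctan_mul hk0).const_mul ((1 - y) ^ 2 / (512 * y * k))
    have := ((t1.sub t2).sub t3).add t4
    convert this using 2
    ring
  have hint := integral_Ioi_of_hasDerivAt_of_nonneg' hderiv hpos htend
  rw [hint]
  have hΦ0 : Φ 0 = 0 := by simp [hΦ]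
  rw [hΦ0, sub_zero]
  rw [g_alt hy0 hy1]
  have hFm : Real.sqrt ((9 - y) * (1 - y)) = sa * sb := Real.sqrt_mul ha.le _
  rw [hFm]
  have hkk : (1 - y) ^ 2 / (512 * y * k) = (1 - y) * (sa * sb) / (512 * y) := by
    rw [hkdef]
    field_simp
    linear_combination (-1 : ℝ) * hsb2
  rw [hkk]
  ring



noncomputable def fθ (p : ℕ) (u : ℝ) : ℝ :=
  u ^ 2 * (1 + u ^ 2) ^ p / ((1 + u ^ 2) ^ 2 * (9 + u ^ 2) ^ (p + 2))

lemma fθ_nonneg (p : ℕ) (u : ℝ) : 0 ≤ fθ p u := by unfold fθ; positivity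

lemma fθ_cont (p : ℕ) : Continuous (fθ p) := by
  apply Continuous.div (by fun_prop) (by fun_prop)
  intro u
  positivity

lemma fθ_le (p : ℕ) (u : ℝ) : fθ p u ≤ (1 + u ^ 2)⁻¹ := by
  have h1 : (0:ℝ) < 1 + u ^ 2 := by positivity
  rw [fθ, div_le_iff₀ (by positivity)]
  have e : (1 + u ^ 2)⁻¹ * ((1 + u ^ 2) ^ 2 * (9 + u ^ 2) ^ (p + 2))
      = (1 + u ^ 2) * (9 + u ^ 2) ^ (p + 2) := by
    field_simp
  rw [e]
  have h2 : u ^ 2 ≤ 1 + u ^ 2 := by linarith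
  have h3 : (1 + u ^ 2) ^ p ≤ (9 + u ^ 2) ^ (p + 2) := by
    calc (1 + u ^ 2) ^ p ≤ (9 + u ^ 2) ^ p :=
          pow_le_pow_left₀ (by positivity) (by linarith) p
      _ ≤ (9 + u ^ 2) ^ (p + 2) := by
          apply pow_le_pow_right₀ (by nlinarith [sq_nonneg u]) (by omega)
  exact mul_le_mul h2 h3 (by positivity) (by positivity)

lemma fθ_int (p : ℕ) : IntegrableOn (fθ p) (Ioi 0) := by
  refine (integrable_inv_one_add_sq.integrableOn).mono'
    (fθ_cont p).aestronglyMeasurable ?_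
  refine ae_of_all _ fun u => ?_
  rw [Real.norm_eq_abs, abs_of_nonneg (fθ_nonneg p u)]
  exact fθ_le p u

lemma hasSum_fθ {y : ℝ} (hy0 : 0 ≤ y) (hy1 : y ≤ 1) (u : ℝ) :
    HasSum (fun p : ℕ => y ^ p * fθ p u)
      (u ^ 2 / ((1 + u ^ 2) ^ 2 * (9 + u ^ 2) * ((9 - y) + (1 - y) * u ^ 2))) := by
  have h9 : (0:ℝ) < 9 + u ^ 2 := by positivity
  have h1 : (0:ℝ) < 1 + u ^ 2 := by positivity
  have hd : (0:ℝ) < (9 - y) + (1 - y) * u ^ 2 := by nlinarith [sq_nonneg u]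
  set r := (1 + u ^ 2) / (9 + u ^ 2) with hr
  have hr0 : 0 ≤ r := by positivity
  have hr1 : r < 1 := by rw [hr, div_lt_one h9]; linarith
  have hyr1 : y * r < 1 := lt_of_le_of_lt (mul_le_of_le_one_left hr0 hy1) hr1
  have geo := (hasSum_geometric_of_lt_one (by positivity) hyr1).mul_left
    (u ^ 2 / ((1 + u ^ 2) ^ 2 * (9 + u ^ 2) ^ 2))
  convert geo using 1
  · rfl
  · funext p
    rw [mul_pow, hr, div_pow]
    rw [fθ, pow_add]
    field_simp
  · rw [hr]
    have e : 1 - y * ((1 + u ^ 2) / (9 + u ^ 2)) = ((9 - y) + (1 - y) * u ^ 2) / (9 + u ^ 2) := by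
      field_simp
      ring
    rw [e]
    field_simp

lemma hasSum_fθ_mean (u : ℝ) :
    HasSum (fun p : ℕ => (p : ℝ) * fθ p u)
      (u ^ 2 / (64 * (1 + u ^ 2) * (9 + u ^ 2))) := by
  have h9 : (0:ℝ) < 9 + u ^ 2 := by positivity
  have h1 : (0:ℝ) < 1 + u ^ 2 := by positivity
  set r := (1 + u ^ 2) / (9 + u ^ 2) with hr
  have hr0 : 0 ≤ r := by positivity
  have hr1 : r < 1 := by rw [hr, div_lt_one h9]; linarith
  have hrn : ‖r‖ < 1 := by rwa [Real.norm_eq_abs, abs_of_nonneg hr0]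
  have geo := (hasSum_coe_mul_geometric_of_norm_lt_one hrn).mul_left
    (u ^ 2 / ((1 + u ^ 2) ^ 2 * (9 + u ^ 2) ^ 2))
  convert geo using 1
  · rfl
  · funext p
    rw [hr, div_pow, fθ, pow_add]
    field_simp
  · rw [hr]
    have e : 1 - (1 + u ^ 2) / (9 + u ^ 2) = 8 / (9 + u ^ 2) := by
      field_simp
      ring
    rw [e]
    field_simp
    ring

lemma tsum_integral_fθ (P : ℕ → ℝ) (hP : ∀ p, 0 ≤ P p) (S : ℝ → ℝ) (V : ℝ)
    (hS : IntegrableOn S (Ioi 0))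
    (hsum : ∀ u ∈ Ioi (0:ℝ), HasSum (fun p => P p * fθ p u) (S u))
    (hV : ∫ u in Ioi (0:ℝ), S u = V) :
    ∑' p : ℕ, P p * ∫ u in Ioi (0:ℝ), fθ p u = V := by
  have hnn : ∀ p u, 0 ≤ P p * fθ p u := fun p u => mul_nonneg (hP p) (fθ_nonneg p u)
  have hSnn : 0 ≤ᵐ[volume.restrict (Ioi (0:ℝ))] S := by
    rw [EventuallyLE, ae_restrict_iff' measurableSet_Ioi]
    exact ae_of_all _ fun u hu => (hsum u hu).nonneg (fun p => hnn p u)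
  have hint : ∀ p : ℕ, IntegrableOn (fun u => P p * fθ p u) (Ioi 0) :=
    fun p => (fθ_int p).const_mul (P p)
  have key : ∀ p : ℕ, ENNReal.ofReal (P p * ∫ u in Ioi (0:ℝ), fθ p u)
      = ∫⁻ u in Ioi (0:ℝ), ENNReal.ofReal (P p * fθ p u) := by
    intro p
    rw [← integral_const_mul]
    exact ofReal_integral_eq_lintegral_ofReal (hint p)
      (ae_of_all _ fun u => hnn p u)
  have hmeas : ∀ p : ℕ, AEMeasurable (fun u => ENNReal.ofReal (P p * fθ p u))
      (volume.restrict (Ioi (0:ℝ))) :=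
    fun p => (measurable_const.mul (fθ_cont p).measurable).ennreal_ofReal.aemeasurable
  have big : ∑' p : ℕ, ENNReal.ofReal (P p * ∫ u in Ioi (0:ℝ), fθ p u)
      = ENNReal.ofReal V := by
    calc ∑' p : ℕ, ENNReal.ofReal (P p * ∫ u in Ioi (0:ℝ), fθ p u)
        = ∑' p : ℕ, ∫⁻ u in Ioi (0:ℝ), ENNReal.ofReal (P p * fθ p u) := by
          exact tsum_congr key
      _ = ∫⁻ u in Ioi (0:ℝ), ∑' p : ℕ, ENNReal.ofReal (P p * fθ p u) := by
          rw [← lintegral_tsum hmeas]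
      _ = ∫⁻ u in Ioi (0:ℝ), ENNReal.ofReal (S u) := by
          apply lintegral_congr_ae
          filter_upwards [ae_restrict_mem measurableSet_Ioi] with u hu
          rw [← ENNReal.ofReal_tsum_of_nonneg (fun p => hnn p u) (hsum u hu).summable,
            (hsum u hu).tsum_eq]
      _ = ENNReal.ofReal V := by
          rw [← hV]
          exact (ofReal_integral_eq_lintegral_ofReal hS hSnn).symm
  have hVnn : 0 ≤ V := by
    rw [← hV]
    exact setIntegral_nonneg measurableSet_Ioi fun u hu =>
      (hsum u hu).nonneg (fun p => hnn p u)
  have hterm : ∀ p : ℕ, 0 ≤ P p * ∫ u in Ioi (0:ℝ), fθ p u := fun p =>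
    mul_nonneg (hP p) (setIntegral_nonneg measurableSet_Ioi fun u _ => fθ_nonneg p u)
  have := congrArg ENNReal.toReal big
  rwa [ENNReal.tsum_toReal_eq (fun p => ENNReal.ofReal_ne_top),
    ENNReal.toReal_ofReal hVnn, funext (fun p => ENNReal.toReal_ofReal (hterm p))] at this


lemma intOn_aux (S : ℝ → ℝ) (hc : Continuous S) (hnn : ∀ u, 0 ≤ S u)
    (hle : ∀ u, S u ≤ (1 + u ^ 2)⁻¹) : IntegrableOn S (Ioi 0) := by
  refine (integrable_inv_one_add_sq.integrableOn).mono' hc.aestronglyMeasurable ?_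
  refine ae_of_all _ fun u => ?_
  rw [Real.norm_eq_abs, abs_of_nonneg (hnn u)]
  exact hle u

end GPGFAuxiliary

/-- `g` is the probability generating function of a critical offspring distribution on `ℕ`. -/
theorem g_is_pgf_of_critical_offspring (g : ℝ → ℝ)
    (hg : ∀ y ∈ Set.Ico (0 : ℝ) 1,
      g y = 1 - 8 / ((Real.sqrt ((9 - y) / (1 - y)) + 2) ^ 2 - 1)) :
    ∃ θ : ℕ → ℝ, (∀ n : ℕ, 0 ≤ θ n) ∧ (∑' n : ℕ, θ n) = 1 ∧
      (∑' n : ℕ, (n : ℝ) * θ n) = 1 ∧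
      ∀ y ∈ Set.Ico (0 : ℝ) 1, (∑' n : ℕ, θ n * y ^ n) = g y := by
  have hπ : (π:ℝ) ≠ 0 := Real.pi_ne_zero
  refine ⟨fun p => 512 / π * ∫ u in Ioi (0:ℝ), fθ p u, ?_, ?_, ?_, ?_⟩
  · intro n
    have h1 : 0 ≤ ∫ u in Ioi (0:ℝ), fθ n u :=
      setIntegral_nonneg measurableSet_Ioi fun u _ => fθ_nonneg n u
    have h2 : (0:ℝ) ≤ 512 / π := by positivity
    exact mul_nonneg h2 h1
  · -- total mass
    have hS : IntegrableOn (fun u : ℝ => u ^ 2 / (8 * (1 + u ^ 2) ^ 2 * (9 + u ^ 2)))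
        (Ioi 0) := by
      apply intOn_aux
      · apply Continuous.div (by fun_prop) (by fun_prop)
        intro u; positivity
      · intro u; positivity
      · intro u
        rw [div_le_iff₀ (by positivity), inv_mul_eq_div, le_div_iff₀ (by positivity)]
        nlinarith [sq_nonneg u, sq_nonneg (u^2), sq_nonneg (1+u^2), pow_le_pow_left₀ (sq_nonneg u) (by nlinarith [sq_nonneg u] : u^2 ≤ 1 + u^2) 2]
    have H := tsum_integral_fθ (fun _ => (1:ℝ)) (fun _ => zero_le_one)
      (fun u => u ^ 2 / (8 * (1 + u ^ 2) ^ 2 * (9 + u ^ 2))) (π / 512) hS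
      (fun u hu => by
        have h := hasSum_fθ (y := 1) zero_le_one le_rfl u
        have e : u ^ 2 / ((1 + u ^ 2) ^ 2 * (9 + u ^ 2) * ((9 - 1) + (1 - 1) * u ^ 2))
            = u ^ 2 / (8 * (1 + u ^ 2) ^ 2 * (9 + u ^ 2)) := by norm_num; ring_nf
        rw [e] at h
        simpa using h)
      E_sum
    simp only [one_mul] at H
    rw [tsum_mul_left, H]
    field_simp
  · -- mean
    have hS : IntegrableOn (fun u : ℝ => u ^ 2 / (64 * (1 + u ^ 2) * (9 + u ^ 2)))
        (Ioi 0) := by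
      apply intOn_aux
      · apply Continuous.div (by fun_prop) (by fun_prop)
        intro u; positivity
      · intro u; positivity
      · intro u
        rw [div_le_iff₀ (by positivity), inv_mul_eq_div, le_div_iff₀ (by positivity)]
        nlinarith [sq_nonneg u, sq_nonneg (u^2)]
    have H := tsum_integral_fθ (fun p => (p : ℝ)) (fun p => Nat.cast_nonneg p)
      (fun u => u ^ 2 / (64 * (1 + u ^ 2) * (9 + u ^ 2))) (π / 512) hS
      (fun u _ => hasSum_fθ_mean u) E_mean
    calc ∑' n : ℕ, (n : ℝ) * (512 / π * ∫ u in Ioi (0:ℝ), fθ n u)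
        = ∑' n : ℕ, 512 / π * ((n : ℝ) * ∫ u in Ioi (0:ℝ), fθ n u) := by
          exact tsum_congr fun n => by ring
      _ = 512 / π * ∑' n : ℕ, (n : ℝ) * ∫ u in Ioi (0:ℝ), fθ n u := tsum_mul_left
      _ = 1 := by rw [H]; field_simp
  · -- pgf
    intro y hy
    obtain ⟨hy0, hy1⟩ := hy
    have h8 : ∀ u : ℝ, (0:ℝ) < (9 - y) + (1 - y) * u ^ 2 := by
      intro u; nlinarith [sq_nonneg u]
    have hS : IntegrableOn
        (fun u : ℝ => u ^ 2 / ((1 + u ^ 2) ^ 2 * (9 + u ^ 2) * ((9 - y) + (1 - y) * u ^ 2)))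
        (Ioi 0) := by
      apply intOn_aux
      · apply Continuous.div (by fun_prop) (by fun_prop)
        intro u
        have := h8 u
        positivity
      · intro u
        have := h8 u
        positivity
      · intro u
        have h8u := h8 u
        rw [div_le_iff₀ (by positivity), inv_mul_eq_div, le_div_iff₀ (by positivity)]
        have hb : (8:ℝ) ≤ (9 - y) + (1 - y) * u ^ 2 := by nlinarith [sq_nonneg u]
        nlinarith [sq_nonneg u, sq_nonneg (u^2), sq_nonneg (1+u^2),
          mul_le_mul_of_nonneg_left hb (by positivity : (0:ℝ) ≤ (1 + u ^ 2) ^ 2 * (9 + u ^ 2))]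
    have hEval : ∫ u in Ioi (0:ℝ),
        u ^ 2 / ((1 + u ^ 2) ^ 2 * (9 + u ^ 2) * ((9 - y) + (1 - y) * u ^ 2))
        = π / 512 * (1 - 8 / ((Real.sqrt ((9 - y) / (1 - y)) + 2) ^ 2 - 1)) := by
      rcases eq_or_lt_of_le hy0 with h0 | h0
      · -- y = 0
        have hy' : y = 0 := h0.symm
        subst hy'
        have e1 : (fun u : ℝ => u ^ 2 / ((1 + u ^ 2) ^ 2 * (9 + u ^ 2) * ((9 - 0) + (1 - 0) * u ^ 2)))
            = fun u : ℝ => u ^ 2 / ((1 + u ^ 2) ^ 2 * (9 + u ^ 2) ^ 2) := by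
          funext u
          norm_num
          ring_nf
        have e2 : Real.sqrt ((9 - 0) / (1 - 0)) = 3 := by
          norm_num
        calc ∫ u in Ioi (0:ℝ),
              u ^ 2 / ((1 + u ^ 2) ^ 2 * (9 + u ^ 2) * ((9 - 0) + (1 - 0) * u ^ 2))
            = ∫ u in Ioi (0:ℝ), u ^ 2 / ((1 + u ^ 2) ^ 2 * (9 + u ^ 2) ^ 2) := by rw [e1]
          _ = π / 768 := E_zero
          _ = π / 512 * (1 - 8 / ((Real.sqrt ((9 - 0) / (1 - 0)) + 2) ^ 2 - 1)) := by
              rw [e2]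
              norm_num
              ring
      · exact E_pos h0 hy1
    have H := tsum_integral_fθ (fun p => y ^ p) (fun p => pow_nonneg hy0 p)
      (fun u => u ^ 2 / ((1 + u ^ 2) ^ 2 * (9 + u ^ 2) * ((9 - y) + (1 - y) * u ^ 2)))
      (π / 512 * (1 - 8 / ((Real.sqrt ((9 - y) / (1 - y)) + 2) ^ 2 - 1))) hS
      (fun u _ => hasSum_fθ hy0 hy1.le u) hEval
    calc ∑' n : ℕ, 512 / π * (∫ u in Ioi (0:ℝ), fθ n u) * y ^ n
        = ∑' n : ℕ, 512 / π * (y ^ n * ∫ u in Ioi (0:ℝ), fθ n u) := by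
          exact tsum_congr fun n => by ring
      _ = 512 / π * ∑' n : ℕ, y ^ n * ∫ u in Ioi (0:ℝ), fθ n u := tsum_mul_left
      _ = 1 - 8 / ((Real.sqrt ((9 - y) / (1 - y)) + 2) ^ 2 - 1) := by
          rw [H]; field_simp
      _ = g y := (hg y ⟨hy0, hy1⟩).symm
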